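/- (Two-iteration merging claim) For every k ≥ 0 and every vertex v, if the R_k-class of v is not its entire connected component (i.e., there exists u with u ~ v and R_k(u) ≠ R_k(v)), then within two further iterations the class of v merges with another class: there exists a vertex w with R_k(w) ≠ R_k(v) and R_{k+2}(w) = R_{k+2}(v). -/
import Mathlib

open scoped Classical in
/-- The component-minimum map: `rho G v` is the least element of the
connected component of `v`. -/
noncomputable def rho {V : Type*} [Fintype V] [LinearOrder V] (G : SimpleGraph V) (v : V) : V :=
  (Finset.univ.filter fun w => G.Reachable w v).min'
    ⟨v, Finset.mem_filter.mpr ⟨Finset.mem_univ v, SimpleGraph.Reachable.refl v⟩⟩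

open scoped Classical in
/-- The update map `T_R`: `upd G R v` is the minimum of the finite nonempty set
`{R v} ∪ {R b : ∃ a, a adjacent to b and R a = R v}`. -/
noncomputable def upd {V : Type*} [Fintype V] [LinearOrder V] (G : SimpleGraph V)
    (R : V → V) (v : V) : V :=
  (insert (R v) ((Finset.univ.filter fun b => ∃ a, G.Adj a b ∧ R a = R v).image R)).min'
    (Finset.insert_nonempty _ _)

/-- The algorithm's iteration: `R_0 = id`, `R_{k+1} = (T_{R_k})^[card V]`. -/
noncomputable def Rseq {V : Type*} [Fintype V] [LinearOrder V] (G : SimpleGraph V) :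
    ℕ → V → V
  | 0 => id
  | k + 1 => (upd G (Rseq G k))^[Fintype.card V]

section Aux

open scoped Classical

variable {V : Type*} [Fintype V] [LinearOrder V] (G : SimpleGraph V)

lemma upd_le (R : V → V) (v : V) : upd G R v ≤ R v :=
  Finset.min'_le _ _ (Finset.mem_insert_self _ _)

lemma upd_congr (R : V → V) {x v : V} (h : R x = R v) : upd G R x = upd G R v := by
  unfold upd; simp only [h]

lemma upd_le_of_adj (R : V → V) {v a b : V} (hadj : G.Adj a b) (ha : R a = R v) :
    upd G R v ≤ R b := by
  apply Finset.min'_le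
  apply Finset.mem_insert_of_mem
  exact Finset.mem_image_of_mem R (Finset.mem_filter.mpr ⟨Finset.mem_univ b, a, hadj, ha⟩)

lemma upd_eq_or (R : V → V) (v : V) :
    upd G R v = R v ∨ ∃ b a, G.Adj a b ∧ R a = R v ∧ upd G R v = R b := by
  have h := (insert (R v)
      ((Finset.univ.filter fun b => ∃ a, G.Adj a b ∧ R a = R v).image R)).min'_mem
      (Finset.insert_nonempty _ _)
  rcases Finset.mem_insert.mp h with h | h
  · exact Or.inl h
  · rcases Finset.mem_image.mp h with ⟨b, hb, hbe⟩
    rcases Finset.mem_filter.mp hb with ⟨_, a, hadj, ha⟩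
    exact Or.inr ⟨b, a, hadj, ha, hbe.symm⟩

lemma iter_le (f : V → V) (hf : ∀ x, f x ≤ x) : ∀ (n : ℕ) (v : V), f^[n] v ≤ v := by
  intro n
  induction n with
  | zero => intro v; simp
  | succ n ih =>
    intro v
    rw [Function.iterate_succ_apply]
    exact (ih (f v)).trans (hf v)

lemma iter_fixed_aux (f : V → V) (hf : ∀ x, f x ≤ x) :
    ∀ (n : ℕ) (v : V), (Finset.univ.filter (· ≤ v)).card ≤ n → f (f^[n] v) = f^[n] v := by
  intro n
  induction n with
  | zero =>
    intro v hv
    exfalso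
    have : v ∈ Finset.univ.filter (· ≤ v) := Finset.mem_filter.mpr ⟨Finset.mem_univ v, le_rfl⟩
    have := Finset.card_pos.mpr ⟨v, this⟩
    omega
  | succ n ih =>
    intro v hv
    rcases eq_or_lt_of_le (hf v) with h | h
    · rw [Function.iterate_fixed h (n+1)]; exact h
    · rw [Function.iterate_succ_apply]
      apply ih
      have hlt : (Finset.univ.filter (· ≤ f v)).card < (Finset.univ.filter (· ≤ v)).card := by
        apply Finset.card_lt_card
        constructor
        · intro x hx
          rcases Finset.mem_filter.mp hx with ⟨_, hx⟩
          exact Finset.mem_filter.mpr ⟨Finset.mem_univ x, le_of_lt (lt_of_le_of_lt hx h)⟩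
        · intro hsub
          have := Finset.mem_filter.mp
            (hsub (Finset.mem_filter.mpr ⟨Finset.mem_univ v, le_rfl⟩))
          exact absurd this.2 (not_le.mpr h)
      omega

lemma iter_fixed (f : V → V) (hf : ∀ x, f x ≤ x) (v : V) :
    f (f^[Fintype.card V] v) = f^[Fintype.card V] v :=
  iter_fixed_aux f hf _ v (by simpa using Finset.card_filter_le Finset.univ (· ≤ v))

lemma Rseq_le : ∀ (k : ℕ) (v : V), Rseq G k v ≤ v := by
  intro k
  induction k with
  | zero => intro v; simp [Rseq]
  | succ k ih =>
    intro v
    simp only [Rseq]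
    exact iter_le _ (fun x => (upd_le G _ x).trans (ih x)) _ v

lemma Rseq_fix (k : ℕ) (v : V) :
    upd G (Rseq G k) (Rseq G (k+1) v) = Rseq G (k+1) v := by
  simp only [Rseq]
  exact iter_fixed _ (fun x => (upd_le G _ x).trans (Rseq_le G k x)) v

lemma Rseq_idem (k : ℕ) (v : V) : Rseq G k (Rseq G k v) = Rseq G k v := by
  cases k with
  | zero => simp [Rseq]
  | succ k =>
    conv_lhs => rw [show Rseq G (k+1) = (upd G (Rseq G k))^[Fintype.card V] from rfl]
    exact Function.iterate_fixed (Rseq_fix G k v) _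

variable [Nonempty V]

lemma Rseq_congr (k : ℕ) {x v : V} (h : Rseq G k x = Rseq G k v) :
    Rseq G (k+1) x = Rseq G (k+1) v := by
  obtain ⟨m, hm⟩ : ∃ m, Fintype.card V = m + 1 :=
    ⟨Fintype.card V - 1, (Nat.succ_pred_eq_of_pos Fintype.card_pos).symm⟩
  simp only [Rseq]
  rw [hm, Function.iterate_succ_apply, Function.iterate_succ_apply, upd_congr G _ h]

lemma Rseq_succ_eq_self (k : ℕ) (v : V) (h : upd G (Rseq G k) v = Rseq G k v) :
    Rseq G (k+1) v = Rseq G k v := by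
  have hfix : upd G (Rseq G k) (Rseq G k v) = Rseq G k v :=
    (upd_congr G _ (Rseq_idem G k v)).trans h
  obtain ⟨m, hm⟩ : ∃ m, Fintype.card V = m + 1 :=
    ⟨Fintype.card V - 1, (Nat.succ_pred_eq_of_pos Fintype.card_pos).symm⟩
  simp only [Rseq]
  rw [hm, Function.iterate_succ_apply, h, Function.iterate_fixed hfix]

lemma Rseq_reach : ∀ (k : ℕ) (v : V), G.Reachable (Rseq G k v) v := by
  intro k
  induction k with
  | zero => intro v; exact SimpleGraph.Reachable.refl v
  | succ k ih =>
    have hstep : ∀ x : V, G.Reachable (upd G (Rseq G k) x) x := by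
      intro x
      rcases upd_eq_or G (Rseq G k) x with h | ⟨b, a, hadj, ha, hb⟩
      · rw [h]; exact ih x
      · rw [hb]
        exact (((ih b).trans hadj.symm.reachable).trans (ih a).symm).trans (ha ▸ ih x)
    intro v
    simp only [Rseq]
    induction (Fintype.card V) with
    | zero => exact SimpleGraph.Reachable.refl v
    | succ n ihn =>
      rw [Function.iterate_succ_apply']
      exact (hstep _).trans ihn

lemma boundary_aux (R : V → V) : ∀ {s t : V} (p : G.Walk s t), R t ≠ R s →
    ∃ a b, G.Adj a b ∧ R a = R s ∧ R b ≠ R s := by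
  intro s t p
  induction p with
  | nil => intro hne; exact absurd rfl hne
  | @cons s y t h q ih =>
    intro hne
    by_cases hy : R y = R s
    · obtain ⟨a, b, hab, ha, hb⟩ := ih (fun he => hne (he.trans hy))
      exact ⟨a, b, hab, ha.trans hy, fun he => hb (he.trans hy.symm)⟩
    · exact ⟨s, y, h, rfl, hy⟩

lemma boundary (R : V → V) {u v : V} (hr : G.Reachable u v) (hne : R u ≠ R v) :
    ∃ a b, G.Adj a b ∧ R a = R v ∧ R b ≠ R v := by
  obtain ⟨p⟩ := hr.symm
  exact boundary_aux G R p hne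

lemma mergeA (k : ℕ) (v : V) (h : upd G (Rseq G k) v ≠ Rseq G k v) :
    ∃ w, Rseq G k w ≠ Rseq G k v ∧ Rseq G (k+1) w = Rseq G (k+1) v := by
  rcases upd_eq_or G (Rseq G k) v with h0 | ⟨b, a, hadj, ha, hb⟩
  · exact absurd h0 h
  refine ⟨b, fun he => h (hb.trans he), ?_⟩
  have h1 : Rseq G (k+1) (Rseq G k b) = Rseq G (k+1) b := Rseq_congr G k (Rseq_idem G k b)
  have h2 : Rseq G (k+1) (Rseq G k b) = Rseq G (k+1) v := by
    conv_lhs => rw [show Rseq G (k+1) = (upd G (Rseq G k))^[Fintype.card V] from rfl]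
    rw [← hb, ← Function.iterate_succ_apply, Function.iterate_succ_apply']
    exact Rseq_fix G k v
  exact h1.symm.trans h2

end Aux

theorem stmt4 {V : Type*} [Fintype V] [Nonempty V] [LinearOrder V] (G : SimpleGraph V) :
    ∀ (k : ℕ) (v : V),
      (∃ u, G.Reachable u v ∧ Rseq G k u ≠ Rseq G k v) →
      ∃ w, Rseq G k w ≠ Rseq G k v ∧ Rseq G (k + 2) w = Rseq G (k + 2) v := by
  intro k v ⟨u, hru, hne⟩
  rcases eq_or_lt_of_le (upd_le G (Rseq G k) v) with ht | ht
  case inr =>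
    -- Case A: the class of v hooks at step k+1
    obtain ⟨w, hw1, hw2⟩ := mergeA G k v (ne_of_lt ht)
    exact ⟨w, hw1, Rseq_congr G (k+1) hw2⟩
  case inl =>
    -- Case B: upd G (Rseq G k) v = Rseq G k v
    have hRv : Rseq G (k+1) v = Rseq G k v := Rseq_succ_eq_self G k v ht
    obtain ⟨a, b, hadj, ha, hb⟩ := boundary G (Rseq G k) hru hne
    -- R' a = R' v
    have hRa : Rseq G (k+1) a = Rseq G (k+1) v := Rseq_congr G k ha
    -- R' b ≤ Rseq G k v
    have hble : Rseq G (k+1) b ≤ Rseq G k v := by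
      have h1 : Rseq G (k+1) b ≤ upd G (Rseq G k) b := by
        obtain ⟨m, hm⟩ : ∃ m, Fintype.card V = m + 1 :=
          ⟨Fintype.card V - 1, (Nat.succ_pred_eq_of_pos Fintype.card_pos).symm⟩
        conv_lhs => rw [show Rseq G (k+1) = (upd G (Rseq G k))^[Fintype.card V] from rfl]
        rw [hm, Function.iterate_succ_apply]
        exact iter_le _ (fun x => (upd_le G _ x).trans (Rseq_le G k x)) m _
      have h2 : upd G (Rseq G k) b ≤ Rseq G k a :=
        upd_le_of_adj G (Rseq G k) hadj.symm rfl
      exact h1.trans (h2.trans (le_of_eq ha))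
    rcases eq_or_lt_of_le hble with hbeq | hblt
    · -- R' b = c = R' v : b itself works
      refine ⟨b, hb, Rseq_congr G (k+1) ?_⟩
      rw [hbeq, hRv]
    · -- R' b < c : class of v hooks at step k+2
      have hlt : upd G (Rseq G (k+1)) v < Rseq G (k+1) v := by
        have := upd_le_of_adj G (Rseq G (k+1)) hadj hRa
        rw [hRv]
        exact lt_of_le_of_lt this hblt
      obtain ⟨w, hw1, hw2⟩ := mergeA G (k+1) v (ne_of_lt hlt)
      refine ⟨w, fun he => hw1 (Rseq_congr G k he), hw2⟩
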